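/- For every ε with 0 < ε < 1 there exists α₀ > 0 such that for all α ≥ α₀ one has D⁺_{ε,α} ⊆ H²_ε, where D⁺_{ε,α} = {(z₁,z₂) ∈ ℂ² : |z₁| < 1, |z₂| < 1, |z₁|² < ε²/4 + (1 − ε²/4)|z₂|^{2α}} and H²_ε = {(z₁,z₂) : |z₁| < ε, |z₂| < 1} ∪ {(z₁,z₂) : |z₁| < 1, 1 − ε < |z₂| < 1}. -/

import Mathlib

/-- First assertion of part (ii) of Lemma `exhaust-l1`: for `α` big enough the
domain `D⁺_{ε,α}` is contained in the Hartogs figure `H²_ε`. -/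
theorem stmt_4 (ε : ℝ) (hε0 : 0 < ε) (hε1 : ε < 1) :
    ∃ α₀ : ℝ, 0 < α₀ ∧ ∀ α : ℝ, α₀ ≤ α →
      {z : ℂ × ℂ | ‖z.1‖ < 1 ∧ ‖z.2‖ < 1 ∧
          ‖z.1‖ ^ 2 <
            ε ^ 2 / 4 + (1 - ε ^ 2 / 4) * ‖z.2‖ ^ (2 * α)} ⊆
        {z : ℂ × ℂ | ‖z.1‖ < ε ∧ ‖z.2‖ < 1} ∪
        {z : ℂ × ℂ | ‖z.1‖ < 1 ∧
          1 - ε < ‖z.2‖ ∧ ‖z.2‖ < 1} := by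
  have h1ε : (0:ℝ) < 1 - ε := by linarith
  have h1ε1 : 1 - ε < 1 := by linarith
  have hc : (0:ℝ) < 3 * ε ^ 2 / 4 := by positivity
  obtain ⟨n, hn⟩ := exists_pow_lt_of_lt_one hc h1ε1
  refine ⟨(n : ℝ) + 1, by positivity, fun α hα z hz => ?_⟩
  obtain ⟨hz1, hz2, hz3⟩ := hz
  by_cases h2 : 1 - ε < ‖z.2‖
  · exact Or.inr ⟨hz1, h2, hz2⟩
  · push_neg at h2
    left
    refine ⟨?_, hz2⟩
    have h2α : (n : ℝ) ≤ 2 * α := by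
      have : (0:ℝ) ≤ n := Nat.cast_nonneg n
      linarith
    have hb1 : ‖z.2‖ ^ (2 * α) ≤ (1 - ε) ^ (2 * α) :=
      Real.rpow_le_rpow (norm_nonneg _) h2 (by linarith)
    have hb2 : (1 - ε) ^ (2 * α) ≤ (1 - ε) ^ (n : ℝ) :=
      Real.rpow_le_rpow_of_exponent_ge h1ε (le_of_lt h1ε1) h2α
    have hb3 : (1 - ε) ^ (n : ℝ) = (1 - ε) ^ n := Real.rpow_natCast _ n
    have hfac : (1 - ε ^ 2 / 4) ≤ 1 := by nlinarith
    have hkey : ‖z.1‖ ^ 2 < ε ^ 2 := by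
      have h4 : (1 - ε ^ 2 / 4) * ‖z.2‖ ^ (2 * α) ≤ 3 * ε ^ 2 / 4 := by
        have h5 : ‖z.2‖ ^ (2 * α) ≤ 3 * ε ^ 2 / 4 := by
          calc ‖z.2‖ ^ (2 * α) ≤ (1 - ε) ^ n := by rw [← hb3]; linarith
            _ ≤ 3 * ε ^ 2 / 4 := le_of_lt hn
        have h6 : (0:ℝ) ≤ ‖z.2‖ ^ (2 * α) := Real.rpow_nonneg (norm_nonneg _) _
        nlinarith
      linarith
    exact lt_of_pow_lt_pow_left₀ 2 (le_of_lt hε0) hkey
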